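/- Let $c>0$, $\tau>0$, $a_-<0$, $b_-<0$, and let $\chi_-(z)=z^2-cz+a_-+b_-e^{-zc\tau}$. If $\lambda$ is a non-real zero of $\chi_-$, then $\lambda$ is a simple zero, i.e. $\chi_-'(\lambda)\ne 0$. -/

import Mathlib

/-- Any non-real zero of `χ₋(z) = z² - cz + a₋ + b₋ e^{-z c τ}` (with `c > 0`,
`τ > 0`, `a₋ < 0`, `b₋ < 0`) is a simple zero. -/
theorem chi_minus_nonreal_zero_simple (c τ a b : ℝ) (hc : 0 < c) (hτ : 0 < τ)
    (ha : a < 0) (hb : b < 0) :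
    ∀ lam : ℂ, lam.im ≠ 0 →
      lam ^ 2 - (c : ℂ) * lam + (a : ℂ) +
        (b : ℂ) * Complex.exp (-(lam * ((c : ℂ) * (τ : ℂ)))) = 0 →
      deriv (fun z : ℂ => z ^ 2 - (c : ℂ) * z + (a : ℂ) +
        (b : ℂ) * Complex.exp (-(z * ((c : ℂ) * (τ : ℂ))))) lam ≠ 0 := by
  intro lam him hz hd
  have hder : HasDerivAt (fun z : ℂ => z ^ 2 - (c : ℂ) * z + (a : ℂ) +
      (b : ℂ) * Complex.exp (-(z * ((c : ℂ) * (τ : ℂ)))))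
      (2 * lam - (c : ℂ) + (b : ℂ) * (Complex.exp (-(lam * ((c : ℂ) * (τ : ℂ)))) * (-((c : ℂ) * (τ : ℂ))))) lam := by
    have h1 : HasDerivAt (fun z : ℂ => z ^ 2) (2 * lam) lam := by
      simpa using hasDerivAt_pow 2 lam
    have h2 : HasDerivAt (fun z : ℂ => (c : ℂ) * z) (c : ℂ) lam := by
      simpa using (hasDerivAt_id lam).const_mul (c : ℂ)
    have h3 : HasDerivAt (fun z : ℂ => -(z * ((c : ℂ) * (τ : ℂ)))) (-((c : ℂ) * (τ : ℂ))) lam := by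
      have := ((hasDerivAt_id' lam).mul_const ((c : ℂ) * (τ : ℂ))).neg
      rw [one_mul] at this
      exact this
    have h4 := (h3.cexp).const_mul (b : ℂ)
    exact ((h1.sub h2).add_const (a : ℂ)).add h4
  rw [hder.deriv] at hd
  set E := Complex.exp (-(lam * ((c : ℂ) * (τ : ℂ)))) with hE
  have hbe : (b : ℂ) * E * ((c : ℂ) * (τ : ℂ)) = 2 * lam - (c : ℂ) := by
    linear_combination -hd
  have hquad : ((c : ℂ) * (τ : ℂ)) * lam ^ 2 + (2 - (c : ℂ) ^ 2 * (τ : ℂ)) * lam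
      + ((a : ℂ) * ((c : ℂ) * (τ : ℂ)) - (c : ℂ)) = 0 := by
    linear_combination ((c : ℂ) * (τ : ℂ)) * hz - hbe
  have hre := congrArg Complex.re hquad
  have him' := congrArg Complex.im hquad
  simp [Complex.add_re, Complex.add_im, Complex.mul_re, Complex.mul_im, Complex.sub_re,
    Complex.sub_im, pow_two, Complex.ofReal_re, Complex.ofReal_im] at hre him'
  have hfac : (c * τ * (2 * lam.re) + (2 - c * c * τ)) * lam.im = 0 := by
    linear_combination him'
  have h2 : c * τ * (2 * lam.re) + (2 - c * c * τ) = 0 :=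
    (mul_eq_zero.mp hfac).resolve_right him
  have hy2 : 0 < lam.im ^ 2 := by positivity
  have hK : 0 < c * τ := mul_pos hc hτ
  nlinarith [sq_nonneg lam.re, mul_pos hK hy2, mul_pos (mul_pos hc hτ) (mul_pos hc hτ)]
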